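/- Let n ≥ 1 and let a_1 ≥ a_2 ≥ … ≥ a_n ≥ 0 be integers with N = a_1 + … + a_n, and let c_r denote the coefficient of q^r in the polynomial ∏_{i=1}^n (1 + q + … + q^{a_i}). Then c_{r−1} < c_r for all integers r with 1 ≤ r ≤ ⌊N/2⌋ if and only if a_1 ≤ a_2 + … + a_n + 1. (Criterion for strict unimodality of a product of chains.) -/

import Mathlib

open Polynomial

/-- The chain polynomial `1 + q + ... + q^a`. -/
noncomputable def facP (a : ℕ) : Polynomial ℕ := ∑ j ∈ Finset.range (a + 1), (X : Polynomial ℕ) ^ j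

/-- Product of chain polynomials over a list. -/
noncomputable def polP (l : List ℕ) : Polynomial ℕ := (l.map facP).prod

lemma polP_nil : polP [] = 1 := by simp [polP]

lemma polP_cons (a : ℕ) (l : List ℕ) : polP (a :: l) = facP a * polP l := by
  simp [polP]

lemma facP_coeff (a i : ℕ) : (facP a).coeff i = if i ≤ a then 1 else 0 := by
  simp only [facP, finset_sum_coeff, coeff_X_pow]
  rw [Finset.sum_ite_eq (Finset.range (a+1)) i (fun _ => (1:ℕ))]
  simp [Nat.lt_succ_iff]

lemma natDegree_facP (a : ℕ) : (facP a).natDegree ≤ a := by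
  apply natDegree_sum_le_of_forall_le
  intro i hi
  simp only [natDegree_X_pow]
  exact Nat.lt_succ_iff.mp (Finset.mem_range.mp hi)

lemma natDegree_polP (l : List ℕ) : (polP l).natDegree ≤ l.sum := by
  induction l with
  | nil => simp [polP_nil]
  | cons a t ih =>
    rw [polP_cons]
    exact (natDegree_mul_le).trans (Nat.add_le_add (natDegree_facP a) ih)

lemma coeff_polP_eq_zero {l : List ℕ} {r : ℕ} (h : l.sum < r) : (polP l).coeff r = 0 :=
  coeff_eq_zero_of_natDegree_lt (lt_of_le_of_lt (natDegree_polP l) h)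

lemma reflect_facP (a : ℕ) : reflect a (facP a) = facP a := by
  ext i
  rw [coeff_reflect, facP_coeff, facP_coeff]
  rcases le_or_gt i a with h | h
  · rw [revAt_le h]
    simp [h, Nat.sub_le]
  · rw [revAt_eq_self_of_lt h]

lemma reflect_polP (l : List ℕ) : reflect l.sum (polP l) = polP l := by
  induction l with
  | nil => simp [polP_nil]
  | cons a t ih =>
    rw [polP_cons, List.sum_cons,
      reflect_mul (facP a) (polP t) (natDegree_facP a) (natDegree_polP t),
      reflect_facP, ih]

lemma coeff_polP_symm {l : List ℕ} {r : ℕ} (h : r ≤ l.sum) :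
    (polP l).coeff (l.sum - r) = (polP l).coeff r := by
  conv_lhs => rw [← reflect_polP l]
  rw [coeff_reflect, revAt_le (Nat.sub_le _ _), Nat.sub_sub_self h]

/-- Coefficient recurrence. -/
lemma coeff_polP_cons (a : ℕ) (t : List ℕ) (r : ℕ) :
    (polP (a :: t)).coeff r
      = ∑ j ∈ Finset.range (a + 1), if j ≤ r then (polP t).coeff (r - j) else 0 := by
  rw [polP_cons, facP, Finset.sum_mul, finset_sum_coeff]
  refine Finset.sum_congr rfl fun j _ => ?_
  rw [mul_comm, coeff_mul_X_pow']

lemma polP_pos {l : List ℕ} : ∀ r, r ≤ l.sum → 1 ≤ (polP l).coeff r := by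
  induction l with
  | nil => intro r hr; simp_all [polP_nil, Nat.le_zero.mp hr]
  | cons a t ih =>
    intro r hr
    rw [List.sum_cons] at hr
    rw [coeff_polP_cons]
    set j0 : ℕ := r - min r t.sum with hj0
    have hj0mem : j0 ∈ Finset.range (a + 1) := by
      rw [Finset.mem_range]; omega
    have h1 : 1 ≤ (if j0 ≤ r then (polP t).coeff (r - j0) else 0) := by
      rw [if_pos (by omega)]
      apply ih
      omega
    exact le_trans h1 (Finset.single_le_sum
      (f := fun j => if j ≤ r then (polP t).coeff (r - j) else 0)
      (fun i _ => Nat.zero_le _) hj0mem)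

/-- The telescoping identity. -/
lemma polP_identity (a : ℕ) (t : List ℕ) {r : ℕ} (hr : 1 ≤ r) :
    (polP (a :: t)).coeff r + (if a + 1 ≤ r then (polP t).coeff (r - 1 - a) else 0)
      = (polP t).coeff r + (polP (a :: t)).coeff (r - 1) := by
  rw [coeff_polP_cons, coeff_polP_cons]
  rw [Finset.sum_range_succ' (fun j => if j ≤ r then (polP t).coeff (r - j) else 0) a]
  rw [Finset.sum_range_succ (fun j => if j ≤ r - 1 then (polP t).coeff (r - 1 - j) else 0) a]
  have hcong : ∀ j, (if j + 1 ≤ r then (polP t).coeff (r - (j+1)) else 0)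
      = (if j ≤ r - 1 then (polP t).coeff (r - 1 - j) else 0) := by
    intro j
    rcases le_or_gt (j + 1) r with h | h
    · rw [if_pos h, if_pos (by omega), show r - (j+1) = r - 1 - j by omega]
    · rw [if_neg (by omega), if_neg (by omega)]
  rw [Finset.sum_congr rfl (fun j _ => hcong j)]
  have h3 : (if (0:ℕ) ≤ r then (polP t).coeff (r - 0) else 0) = (polP t).coeff r := by
    simp
  rw [h3]
  rcases le_or_gt (a + 1) r with h | h
  · rw [if_pos h, if_pos (by omega : a ≤ r - 1)]; ring
  · rw [if_neg (by omega), if_neg (by omega)]; ring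

/-- Main induction: weak monotonicity and the strictness criterion. -/
lemma polP_main : ∀ l : List ℕ, l.Pairwise (· ≥ ·) →
    (∀ r, 1 ≤ r → 2 * r ≤ l.sum → (polP l).coeff (r - 1) ≤ (polP l).coeff r) ∧
    (∀ r, 1 ≤ r → 2 * r ≤ l.sum →
      ((polP l).coeff (r - 1) < (polP l).coeff r ↔ r ≤ l.sum - l.headI)) := by
  intro l
  induction l with
  | nil => intro _; constructor <;> (intro r hr hr2; simp at hr2; omega)
  | cons a t ih =>
    intro hsort
    have hsort' : t.Pairwise (· ≥ ·) := hsort.of_cons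
    have hhead : ∀ x ∈ t, x ≤ a := fun x hx => List.rel_of_pairwise_cons hsort hx
    obtain ⟨weak_t, iff_t⟩ := ih hsort'
    set S := t.sum with hS
    set b := polP t with hb
    -- chain: weak monotonicity over an interval
    have chain : ∀ d j : ℕ, 2 * (j + d) ≤ S → b.coeff j ≤ b.coeff (j + d) := by
      intro d
      induction d with
      | zero => intro j _; simp
      | succ d ihd =>
        intro j h2
        calc b.coeff j ≤ b.coeff (j + d) := ihd j (by omega)
          _ ≤ b.coeff (j + d + 1) := by
              have := weak_t (j + d + 1) (by omega) (by omega)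
              simpa using this
    have chain' : ∀ j i : ℕ, j ≤ i → 2 * i ≤ S → b.coeff j ≤ b.coeff i := by
      intro j i hji h2
      have := chain (i - j) j (by omega)
      rwa [Nat.add_sub_cancel' hji] at this
    -- combined weak comparison possibly through symmetry
    have cmp_weak : ∀ j i : ℕ, j ≤ i → i ≤ S → i + j ≤ S → b.coeff j ≤ b.coeff i := by
      intro j i hji hiS hijS
      rcases le_or_gt (2 * i) S with h | h
      · exact chain' j i hji h
      · have hsym : b.coeff (S - i) = b.coeff i := coeff_polP_symm hiS
        rw [← hsym]
        exact chain' j (S - i) (by omega) (by omega)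
    have headt_le : t ≠ [] → t.headI ≤ a := by
      intro hne
      match t, hne with
      | x :: t', _ => exact hhead x (List.mem_cons_self)
    constructor
    · -- weak monotonicity
      intro r hr hr2
      rw [List.sum_cons] at hr2
      have key := polP_identity a t hr
      have hmain : (if a + 1 ≤ r then (polP t).coeff (r - 1 - a) else 0)
          ≤ (polP t).coeff r := by
        rcases le_or_gt (a + 1) r with hc | hc
        · rw [if_pos hc]
          rcases le_or_gt r S with hrS | hrS
          · exact cmp_weak (r - 1 - a) r (by omega) hrS (by omega)
          · omega  -- contradiction: a+1 ≤ r, 2r ≤ a+S, S < r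
        · rw [if_neg (by omega)]; exact Nat.zero_le _
      omega
    · -- strictness criterion
      intro r hr hr2
      rw [List.sum_cons] at hr2
      have hhd : (a :: t).headI = a := rfl
      rw [List.sum_cons, hhd]
      have key := polP_identity a t hr
      constructor
      · -- strict → r ≤ S
        intro hlt
        by_contra hcon
        push_neg at hcon
        have hbz : (polP t).coeff r = 0 := coeff_polP_eq_zero (by omega)
        omega
      · -- r ≤ S → strict
        intro hrS
        have hrS' : r ≤ S := by omega
        have hmain : (if a + 1 ≤ r then (polP t).coeff (r - 1 - a) else 0)
            < (polP t).coeff r := by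
          rcases le_or_gt (a + 1) r with hc | hc
          · rw [if_pos hc]
            set j := r - 1 - a with hj
            have htne : t ≠ [] := by
              intro h; rw [h] at hS; simp at hS; omega
            have hta : t.headI ≤ a := headt_le htne
            -- strict step: b.coeff j < b.coeff (j+1)
            have hstrict : (polP t).coeff j < (polP t).coeff (j + 1) := by
              have := (iff_t (j + 1) (by omega) (by omega)).mpr (by omega)
              simpa using this
            -- weak tail: b.coeff (j+1) ≤ b.coeff r
            have hweak : (polP t).coeff (j + 1) ≤ (polP t).coeff r :=
              cmp_weak (j + 1) r (by omega) hrS' (by omega)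
            omega
          · rw [if_neg (by omega)]
            exact polP_pos r hrS'
        omega

open Polynomial in
/-- Criterion for strict unimodality of a product of chains
`[a 0] × … × [a (n-1)]` with `a 0 ≥ a 1 ≥ … ≥ a (n-1) ≥ 0`. -/
theorem stmt4 (n : ℕ) (hn : 0 < n) (a : Fin n → ℕ)
    (ha : ∀ i j : Fin n, i ≤ j → a j ≤ a i) :
    (∀ r : ℕ, 1 ≤ r → 2 * r ≤ ∑ i, a i →
      (∏ i, ∑ j ∈ Finset.range (a i + 1), (X : Polynomial ℕ) ^ j).coeff (r - 1) <
        (∏ i, ∑ j ∈ Finset.range (a i + 1), (X : Polynomial ℕ) ^ j).coeff r) ↔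
    a ⟨0, hn⟩ ≤ (∑ i ∈ Finset.univ.erase ⟨0, hn⟩, a i) + 1 := by
  obtain ⟨m, rfl⟩ := Nat.exists_eq_succ_of_ne_zero hn.ne'
  set l : List ℕ := List.ofFn a with hl
  have hprod : polP l = ∏ i, ∑ j ∈ Finset.range (a i + 1), (X : Polynomial ℕ) ^ j := by
    rw [polP, hl, List.map_ofFn, List.prod_ofFn]
    rfl
  have hsum : l.sum = ∑ i, a i := by rw [hl, List.sum_ofFn]
  have hsorted : l.Pairwise (· ≥ ·) := by
    rw [hl, List.pairwise_ofFn]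
    intro i j hij
    exact ha i j hij.le
  have hhead : l.headI = a ⟨0, hn⟩ := by
    rw [hl, List.ofFn_succ]
    rfl
  have hmem : (⟨0, hn⟩ : Fin (m+1)) ∈ Finset.univ := Finset.mem_univ _
  have hNsplit : a ⟨0, hn⟩ + ∑ i ∈ Finset.univ.erase ⟨0, hn⟩, a i = ∑ i, a i :=
    Finset.add_sum_erase _ a hmem
  set a0 := a ⟨0, hn⟩ with ha0
  set S' := ∑ i ∈ Finset.univ.erase ⟨0, hn⟩, a i with hS'
  set N := ∑ i : Fin (m+1), a i with hN
  obtain ⟨_, criterion⟩ := polP_main l hsorted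
  rw [hsum, hhead] at criterion
  rw [← hprod]
  constructor
  · intro h
    rcases le_or_gt N 1 with hN1 | hN1
    · omega
    · have hr := h (N / 2) (by omega) (by omega)
      have := (criterion (N / 2) (by omega) (by omega)).mp hr
      omega
  · intro h r hr hr2
    exact (criterion r hr hr2).mpr (by omega)
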